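/- For a linear map L on a finite-dimensional space with dim C = ℓ, the condition 'Δ ∘ L^n ∘ Δ⊥ ∘ L^{n'} ∘ Δ = 0 for all n, n' ∈ ℕ' holds if and only if L_pc ∘ L_cc^j ∘ L_cp = 0 for all j ∈ {0, 1, …, ℓ − 1}. -/
import Mathlib

section RingAux
variable {R : Type*} [Ring R]

private lemma shiftQ (L Δ : R) (j : ℕ) :
    (1 - Δ) * (L * (1 - Δ)) ^ j = ((1 - Δ) * L) ^ j * (1 - Δ) := by
  induction j with
  | zero => simp
  | succ k ih =>
    rw [pow_succ (L * (1 - Δ)), ← mul_assoc, ih, pow_succ ((1 - Δ) * L)]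
    simp only [mul_assoc]

private lemma shuffle2 (L Δ : R) (j : ℕ) :
    L * ((1 - Δ) * L) ^ j * (1 - Δ) = (L * (1 - Δ)) ^ (j + 1) := by
  rw [pow_succ' (L * (1 - Δ)), mul_assoc, ← shiftQ]
  simp only [mul_assoc]

private lemma bridgeE (L Δ : R) (hΔ : Δ * Δ = Δ) (j : ℕ) :
    (Δ * L * (1 - Δ)) * ((1 - Δ) * L * (1 - Δ)) ^ j * ((1 - Δ) * L * Δ)
      = Δ * (L * (1 - Δ)) ^ (j + 1) * L * Δ := by
  have hQQ : (1 - Δ) * (1 - Δ) = 1 - Δ := by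
    rw [mul_sub, mul_one, sub_mul, one_mul, hΔ, sub_self, sub_zero]
  have hp : ((1 - Δ) * L * (1 - Δ)) ^ j * (1 - Δ) = (1 - Δ) * (L * (1 - Δ)) ^ j := by
    induction j with
    | zero => simp
    | succ k ih =>
      rw [pow_succ' ((1 - Δ) * L * (1 - Δ)), mul_assoc, ih, pow_succ' (L * (1 - Δ))]
      calc (1 - Δ) * L * (1 - Δ) * ((1 - Δ) * (L * (1 - Δ)) ^ k)
          = (1 - Δ) * L * ((1 - Δ) * (1 - Δ)) * (L * (1 - Δ)) ^ k := by
            simp only [mul_assoc]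
        _ = (1 - Δ) * (L * (1 - Δ) * (L * (1 - Δ)) ^ k) := by
            rw [hQQ]; simp only [mul_assoc]
  calc (Δ * L * (1 - Δ)) * ((1 - Δ) * L * (1 - Δ)) ^ j * ((1 - Δ) * L * Δ)
      = Δ * L * ((1 - Δ) * (((1 - Δ) * L * (1 - Δ)) ^ j * (1 - Δ))) * (L * Δ) := by
        simp only [mul_assoc]
    _ = Δ * L * ((1 - Δ) * ((1 - Δ) * (L * (1 - Δ)) ^ j)) * (L * Δ) := by rw [hp]
    _ = Δ * (L * ((1 - Δ) * (L * (1 - Δ)) ^ j)) * (L * Δ) := by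
        rw [← mul_assoc (1 - Δ), hQQ]; simp only [mul_assoc]
    _ = Δ * (L * (1 - Δ) * (L * (1 - Δ)) ^ j) * (L * Δ) := by simp only [mul_assoc]
    _ = Δ * (L * (1 - Δ)) ^ (j + 1) * L * Δ := by
        rw [← pow_succ' (L * (1 - Δ))]; simp only [mul_assoc]

private lemma aux_fwd (L Δ : R)
    (h : ∀ n n' : ℕ, Δ * L ^ n * (1 - Δ) * L ^ n' * Δ = 0) :
    ∀ j m : ℕ, Δ * (L * (1 - Δ)) ^ (j + 1) * L ^ m * Δ = 0 := by
  intro j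
  induction j with
  | zero => intro m; simpa [mul_assoc] using h 1 m
  | succ k ih =>
    intro m
    have e2 := ih 1
    rw [pow_one] at e2
    have e : Δ * (L * (1 - Δ)) ^ (k + 1 + 1) * L ^ m * Δ
        = Δ * (L * (1 - Δ)) ^ (k + 1) * L ^ (m + 1) * Δ
          - (Δ * (L * (1 - Δ)) ^ (k + 1) * L * Δ) * (L ^ m * Δ) := by
      rw [pow_succ (L * (1 - Δ)) (k + 1), pow_succ' L m]
      generalize (L * (1 - Δ)) ^ (k + 1) = P
      noncomm_ring
    rw [e, ih (m + 1), e2]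
    simp

private lemma aux_bwd (L Δ : R) (hΔ : Δ * Δ = Δ)
    (hB : ∀ j : ℕ, Δ * (L * (1 - Δ)) ^ (j + 1) * L * Δ = 0) :
    ∀ n n' : ℕ, Δ * L ^ n * (1 - Δ) * L ^ n' * Δ = 0 := by
  have hΔQ : Δ * (1 - Δ) = 0 := by rw [mul_sub, hΔ, mul_one, sub_self]
  have hQΔ : (1 - Δ) * Δ = 0 := by rw [sub_mul, hΔ, one_mul, sub_self]
  have Z : ∀ n j : ℕ, Δ * L ^ n * ((1 - Δ) * L) ^ j * ((1 - Δ) * L * Δ) = 0 := by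
    intro n
    induction n with
    | zero =>
      intro j
      cases j with
      | zero =>
        rw [pow_zero, pow_zero]
        calc Δ * 1 * 1 * ((1 - Δ) * L * Δ) = (Δ * (1 - Δ)) * (L * Δ) := by
              simp only [mul_one, mul_assoc]
          _ = 0 := by rw [hΔQ, zero_mul]
      | succ k =>
        rw [pow_zero, pow_succ' ((1 - Δ) * L)]
        calc Δ * 1 * ((1 - Δ) * L * ((1 - Δ) * L) ^ k) * ((1 - Δ) * L * Δ)
            = (Δ * (1 - Δ)) * (L * (((1 - Δ) * L) ^ k * ((1 - Δ) * (L * Δ)))) := by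
              simp only [mul_one, mul_assoc]
          _ = 0 := by rw [hΔQ, zero_mul]
    | succ n ih =>
      intro j
      have w := hB j
      rw [← shuffle2 L Δ j] at w
      have w' : Δ * (L * (((1 - Δ) * L) ^ j * ((1 - Δ) * (L * Δ)))) = 0 := by
        simpa only [mul_assoc] using w
      have e : Δ * L ^ (n + 1) * ((1 - Δ) * L) ^ j * ((1 - Δ) * L * Δ)
          = Δ * L ^ n * (Δ * (L * (((1 - Δ) * L) ^ j * ((1 - Δ) * (L * Δ)))))
            + Δ * L ^ n * ((1 - Δ) * L) ^ (j + 1) * ((1 - Δ) * L * Δ) := by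
        rw [pow_succ L n, pow_succ' ((1 - Δ) * L) j]
        generalize ((1 - Δ) * L) ^ j = P
        noncomm_ring
      rw [e, w', ih (j + 1)]
      simp
  have Y : ∀ n' n j : ℕ, Δ * L ^ n * ((1 - Δ) * L) ^ j * (1 - Δ) * L ^ n' * Δ = 0 := by
    intro n'
    induction n' with
    | zero =>
      intro n j
      rw [pow_zero]
      calc Δ * L ^ n * ((1 - Δ) * L) ^ j * (1 - Δ) * 1 * Δ
          = Δ * L ^ n * (((1 - Δ) * L) ^ j * ((1 - Δ) * Δ)) := by
            simp only [mul_one, mul_assoc]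
        _ = 0 := by rw [hQΔ]; simp
    | succ m ih =>
      intro n j
      have e : Δ * L ^ n * ((1 - Δ) * L) ^ j * (1 - Δ) * L ^ (m + 1) * Δ
          = (Δ * L ^ n * ((1 - Δ) * L) ^ j * ((1 - Δ) * L * Δ)) * (L ^ m * Δ)
            + Δ * L ^ n * ((1 - Δ) * L) ^ (j + 1) * (1 - Δ) * L ^ m * Δ := by
        rw [pow_succ' L m, pow_succ ((1 - Δ) * L) j]
        generalize ((1 - Δ) * L) ^ j = P
        noncomm_ring
      rw [e, Z n j, ih n (j + 1)]
      simp
  intro n n'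
  have := Y n' n 0
  rw [pow_zero, mul_one] at this
  exact this

end RingAux

private lemma chAll (V : Type*) [AddCommGroup V] [Module ℂ V] [FiniteDimensional ℂ V]
    (L Δ : Module.End ℂ V)
    (hfin : ∀ j < Module.finrank ℂ (LinearMap.range (1 - Δ)),
      (Δ * L * (1 - Δ)) * ((1 - Δ) * L * (1 - Δ)) ^ j * ((1 - Δ) * L * Δ) = 0) :
    ∀ j : ℕ,
      (Δ * L * (1 - Δ)) * ((1 - Δ) * L * (1 - Δ)) ^ j * ((1 - Δ) * L * Δ) = 0 := by
  set ℓ := Module.finrank ℂ (LinearMap.range (1 - Δ)) with hℓ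
  set C : Submodule ℂ V := LinearMap.range (1 - Δ) with hC
  set A : Module.End ℂ V := (1 - Δ) * L * (1 - Δ) with hA
  have hmem : ∀ x ∈ C, A x ∈ C := by
    intro x _
    exact ⟨L ((1 - Δ) x), rfl⟩
  set A' : Module.End ℂ C := A.restrict hmem with hA'
  set π : V →ₗ[ℂ] C := (1 - Δ).codRestrict C (fun x => LinearMap.mem_range_self _ x) with hπ
  have hcomm : ∀ (j : ℕ) (x : V), (A ^ j) ((1 - Δ) x) = ((A' ^ j) (π x) : V) := by
    intro j
    induction j with
    | zero => intro x; simp [π]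
    | succ k ih =>
      intro x
      rw [pow_succ' A, pow_succ' A']
      have h2 : (A * A ^ k) ((1 - Δ) x) = A ((A ^ k) ((1 - Δ) x)) := rfl
      rw [h2, ih x]
      exact (LinearMap.restrict_coe_apply A hmem _).symm
  have hCH := LinearMap.aeval_self_charpoly A'
  have hmon := A'.charpoly_monic
  have hdeg : A'.charpoly.natDegree = ℓ := by rw [hℓ]; exact A'.charpoly_natDegree
  have hsum : ∑ i ∈ Finset.range (ℓ + 1), A'.charpoly.coeff i • A' ^ i = 0 := by
    rw [← hdeg, ← Polynomial.aeval_eq_sum_range]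
    exact hCH
  have hAl : A' ^ ℓ = ∑ i ∈ Finset.range ℓ, (-(A'.charpoly.coeff i)) • A' ^ i := by
    rw [Finset.sum_range_succ, ← hdeg] at hsum
    rw [hmon.coeff_natDegree, one_smul] at hsum
    rw [hdeg] at hsum
    have := neg_eq_of_add_eq_zero_right hsum
    rw [← this, ← Finset.sum_neg_distrib]
    exact Finset.sum_congr rfl fun i _ => (neg_smul _ _).symm
  have hA_op : A ^ ℓ * (1 - Δ)
      = ∑ i ∈ Finset.range ℓ, (-(A'.charpoly.coeff i)) • (A ^ i * (1 - Δ)) := by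
    ext x
    have h1 : (A ^ ℓ * (1 - Δ)) x = (A ^ ℓ) ((1 - Δ) x) := rfl
    rw [h1, hcomm ℓ x, hAl]
    simp only [LinearMap.sum_apply, LinearMap.smul_apply, Submodule.coe_sum,
      Submodule.coe_smul, Module.End.mul_apply]
    exact Finset.sum_congr rfl fun i _ => by rw [← hcomm i x]
  have hg : ∀ k i : ℕ,
      (Δ * L * (1 - Δ)) * (A ^ k * ((A ^ i * (1 - Δ)) * (L * Δ)))
        = (Δ * L * (1 - Δ)) * A ^ (k + i) * ((1 - Δ) * L * Δ) := by
    intro k i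
    rw [pow_add]
    simp only [mul_assoc]
  intro j
  induction j using Nat.strong_induction_on with
  | _ j ih =>
    rcases lt_or_ge j ℓ with hj | hj
    · exact hfin j hj
    · obtain ⟨k, rfl⟩ : ∃ k, j = k + ℓ := ⟨j - ℓ, by omega⟩
      calc (Δ * L * (1 - Δ)) * A ^ (k + ℓ) * ((1 - Δ) * L * Δ)
          = (Δ * L * (1 - Δ)) * (A ^ k * ((A ^ ℓ * (1 - Δ)) * (L * Δ))) := by
            rw [pow_add]; simp only [mul_assoc]
        _ = (Δ * L * (1 - Δ)) * (A ^ k *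
              ((∑ i ∈ Finset.range ℓ, (-(A'.charpoly.coeff i)) • (A ^ i * (1 - Δ))) * (L * Δ))) := by
            rw [hA_op]
        _ = ∑ i ∈ Finset.range ℓ, (-(A'.charpoly.coeff i)) •
              ((Δ * L * (1 - Δ)) * (A ^ k * ((A ^ i * (1 - Δ)) * (L * Δ)))) := by
            simp only [Finset.sum_mul, Finset.mul_sum, smul_mul_assoc, mul_smul_comm]
        _ = 0 := by
            refine Finset.sum_eq_zero fun i hi => ?_
            rw [hg k i, ih (k + i) (by simp at hi; omega)]
            simp

/-- `Δ L^n Δ⊥ L^{n'} Δ = 0` for all `n, n'` iff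
`L_pc L_cc^j L_cp = 0` for all `j < ℓ`, where `ℓ = dim C` is the dimension of the
coherence subspace (the range of `Δ⊥ = 1 - Δ`). -/
theorem ncgd_iff_finitely_many (V : Type*) [AddCommGroup V] [Module ℂ V] [FiniteDimensional ℂ V]
    (L Δ : Module.End ℂ V) (hΔ : Δ * Δ = Δ) :
    (∀ n n' : ℕ, Δ * L ^ n * (1 - Δ) * L ^ n' * Δ = 0) ↔
    (∀ j < Module.finrank ℂ (LinearMap.range (1 - Δ)),
      (Δ * L * (1 - Δ)) * ((1 - Δ) * L * (1 - Δ)) ^ j * ((1 - Δ) * L * Δ) = 0) := by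
  constructor
  · intro h j _
    rw [bridgeE L Δ hΔ j]
    have := aux_fwd L Δ h j 1
    rwa [pow_one] at this
  · intro hfin
    exact aux_bwd L Δ hΔ fun j => by
      rw [← bridgeE L Δ hΔ j]; exact chAll V L Δ hfin j
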